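/- The cover pebbling ratio of the d-dimensional hypercube Q^d equals (3/2)^d; equivalently, writing n = 2^d for the number of vertices of Q^d, the ratio γ(Q^d)/π(Q^d) equals n^{log₂3 − 1}. -/

import Mathlib

open Finset

/-- A pebbling step on graph `G`: remove two pebbles from a vertex `u`,
place one pebble on an adjacent vertex `v`. -/
def PebbleStep {V : Type*} (G : SimpleGraph V) (C C' : V → ℕ) : Prop :=
  ∃ u v : V, G.Adj u v ∧ 2 ≤ C u ∧ C' u = C u - 2 ∧ C' v = C v + 1 ∧
    ∀ x : V, x ≠ u → x ≠ v → C' x = C x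

/-- A configuration is coverable if after some sequence of pebbling steps
every vertex has at least one pebble. -/
def Coverable {V : Type*} (G : SimpleGraph V) (C : V → ℕ) : Prop :=
  ∃ C' : V → ℕ, Relation.ReflTransGen (PebbleStep G) C C' ∧ ∀ v : V, 1 ≤ C' v

/-- The `d`-dimensional hypercube: vertices are binary `d`-tuples, adjacent
exactly when they differ in one coordinate. -/
def cube (d : ℕ) : SimpleGraph (Fin d → Bool) where
  Adj x y := hammingDist x y = 1
  symm := ⟨fun x y h => (hammingDist_comm y x).trans h⟩
  loopless := ⟨fun x h => by simp [hammingDist_self] at h⟩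

/-- The cover pebbling number: the minimum `m` such that every configuration
of size `m` on `G` is coverable. -/
noncomputable def coverPebblingNumber {V : Type*} [Fintype V] (G : SimpleGraph V) : ℕ :=
  sInf {m : ℕ | ∀ C : V → ℕ, (∑ v, C v) = m → Coverable G C}

/-- The pebbling number: the minimum `m` such that from every configuration of
size `m` and for every target vertex, some sequence of pebbling steps places a
pebble on the target. -/
noncomputable def pebblingNumber {V : Type*} [Fintype V] (G : SimpleGraph V) : ℕ :=
  sInf {m : ℕ | ∀ (C : V → ℕ) (t : V), (∑ v, C v) = m →
    ∃ C' : V → ℕ, Relation.ReflTransGen (PebbleStep G) C C' ∧ 1 ≤ C' t}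

namespace CPR

abbrev Reach {V : Type*} (G : SimpleGraph V) : (V → ℕ) → (V → ℕ) → Prop :=
  Relation.ReflTransGen (PebbleStep G)

section Generic

variable {V : Type*} {G : SimpleGraph V}

lemma pebbleStep_mk [DecidableEq V] {C : V → ℕ} {u v : V}
    (h : G.Adj u v) (h2 : 2 ≤ C u) :
    PebbleStep G C (fun x => if x = u then C u - 2 else if x = v then C v + 1 else C x) := by
  have huv : u ≠ v := h.ne
  refine ⟨u, v, h, h2, by simp, ?_, ?_⟩
  · simp [huv.symm]
  · intro x hxu hxv; simp [hxu, hxv]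

lemma sum_split_pair [Fintype V] [DecidableEq V] {u v : V} (huv : u ≠ v) (f : V → ℕ) :
    ∑ x, f x = ∑ x ∈ univ \ {u, v}, f x + (f u + f v) := by
  rw [← Finset.sum_sdiff (Finset.subset_univ {u, v}), Finset.sum_pair huv]

lemma weight_mono [Fintype V] (w : V → ℕ)
    (hw : ∀ u v, G.Adj u v → w v ≤ 2 * w u) {C C' : V → ℕ}
    (h : Reach G C C') : ∑ x, C' x * w x ≤ ∑ x, C x * w x := by
  classical
  induction h with
  | refl => exact le_refl _
  | tail _ step ih =>
    refine le_trans ?_ ih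
    rename_i b c _
    obtain ⟨u, v, hadj, h2, hu, hv, hrest⟩ := step
    have huv : u ≠ v := hadj.ne
    rw [sum_split_pair huv (fun x => c x * w x), sum_split_pair huv (fun x => b x * w x)]
    have hbase : ∑ x ∈ univ \ {u, v}, c x * w x = ∑ x ∈ univ \ {u, v}, b x * w x := by
      refine Finset.sum_congr rfl ?_
      intro x hx
      simp only [Finset.mem_sdiff, Finset.mem_insert, Finset.mem_singleton] at hx
      rw [hrest x (fun hh => hx.2 (Or.inl hh)) (fun hh => hx.2 (Or.inr hh))]
    rw [hbase]
    have h3 : (b u - 2) * w u = b u * w u - 2 * w u := Nat.sub_mul _ _ _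
    have h4 : 2 * w u ≤ b u * w u := Nat.mul_le_mul_right _ h2
    have h5 : w v ≤ 2 * w u := hw u v hadj
    rw [hu, hv]
    have : (b u - 2) * w u + (b v + 1) * w v ≤ b u * w u + b v * w v := by
      rw [add_mul, one_mul, h3]
      omega
    omega

lemma step_lift {W : Type*} {H : SimpleGraph W}
    (f : V → W) (hinj : Function.Injective f)
    (hadj : ∀ {a b : V}, G.Adj a b → H.Adj (f a) (f b))
    {b c : V → ℕ} (step : PebbleStep G b c) (D : W → ℕ) (hD : ∀ x, D (f x) = b x) :
    ∃ D', PebbleStep H D D' ∧ (∀ x, D' (f x) = c x) ∧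
      ∀ y, (∀ x, y ≠ f x) → D' y = D y := by
  classical
  obtain ⟨u, v, huv, h2, hu, hv, hrest⟩ := step
  have hfufv : f u ≠ f v := fun hh => huv.ne (hinj hh)
  refine ⟨fun y => if y = f u then b u - 2 else if y = f v then b v + 1 else D y,
    ⟨f u, f v, hadj huv, by rw [hD u]; exact h2, by simp [hD u], by simp [hfufv.symm, hD v],
      fun y hyu hyv => by simp [hyu, hyv]⟩, ?_, ?_⟩
  · intro x
    by_cases hxu : x = u
    · subst hxu; simp [hu]
    · by_cases hxv : x = v
      · subst hxv; simp [hfufv.symm, hv]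
      · have h1 : f x ≠ f u := fun hh => hxu (hinj hh)
        have h2' : f x ≠ f v := fun hh => hxv (hinj hh)
        simp only [h1, h2', if_false]
        rw [hD x, hrest x hxu hxv]
  · intro y hy
    simp [hy u, hy v]

lemma reach_lift {W : Type*} {H : SimpleGraph W}
    (f : V → W) (hinj : Function.Injective f)
    (hadj : ∀ {a b : V}, G.Adj a b → H.Adj (f a) (f b))
    {C C' : V → ℕ} (h : Reach G C C')
    (D : W → ℕ) (hD : ∀ x, D (f x) = C x) :
    ∃ D', Reach H D D' ∧ (∀ x, D' (f x) = C' x) ∧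
      ∀ y, (∀ x, y ≠ f x) → D' y = D y := by
  induction h with
  | refl => exact ⟨D, Relation.ReflTransGen.refl, hD, fun _ _ => rfl⟩
  | tail _ step ih =>
    obtain ⟨D1, hr1, hf1, ho1⟩ := ih
    obtain ⟨D2, hs2, hf2, ho2⟩ := step_lift f hinj hadj step D1 hf1
    exact ⟨D2, hr1.tail hs2, hf2, fun y hy => (ho2 y hy).trans (ho1 y hy)⟩

end Generic

section Cube

variable {d : ℕ}

lemma hammingDist_eq_sum {n : ℕ} (x y : Fin n → Bool) :
    hammingDist x y = ∑ i, if x i = y i then 0 else 1 := by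
  show (univ.filter fun i => x i ≠ y i).card = _
  rw [Finset.card_filter]
  refine Finset.sum_congr rfl fun i _ => by by_cases h : x i = y i <;> simp [h]

lemma hammingDist_cons (a b : Bool) (x y : Fin d → Bool) :
    hammingDist (Fin.cons a x : Fin (d+1) → Bool) (Fin.cons b y : Fin (d+1) → Bool)
      = (if a = b then 0 else 1) + hammingDist x y := by
  rw [hammingDist_eq_sum, hammingDist_eq_sum, Fin.sum_univ_succ]
  simp [Fin.cons_zero, Fin.cons_succ]

lemma cube_adj_cons {c : Bool} {x y : Fin d → Bool} (h : (cube d).Adj x y) :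
    (cube (d+1)).Adj (Fin.cons c x : Fin (d+1) → Bool) (Fin.cons c y : Fin (d+1) → Bool) := by
  show hammingDist _ _ = 1
  rw [hammingDist_cons]
  have h' : hammingDist x y = 1 := h
  simpa using h'

lemma cube_adj_cross (c c' : Bool) (h : c ≠ c') (x : Fin d → Bool) :
    (cube (d+1)).Adj (Fin.cons c x : Fin (d+1) → Bool) (Fin.cons c' x : Fin (d+1) → Bool) := by
  show hammingDist _ _ = 1
  rw [hammingDist_cons]
  simp [h, hammingDist_self]

lemma cons_ne_cons {c c' : Bool} (h : c ≠ c') (x y : Fin d → Bool) :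
    (Fin.cons c x : Fin (d+1) → Bool) ≠ (Fin.cons c' y : Fin (d+1) → Bool) := by
  intro hh
  exact h (by simpa using congrFun hh 0)

lemma sum_split (f : (Fin (d+1) → Bool) → ℕ) :
    ∑ y, f y = (∑ x, f (Fin.cons false x)) + ∑ x, f (Fin.cons true x) := by
  rw [← Equiv.sum_comp (Fin.consEquiv (fun _ : Fin (d+1) => Bool)) f, Fintype.sum_prod_type,
    Fintype.sum_bool]
  exact add_comm _ _

lemma sum_split' (c : Bool) (f : (Fin (d+1) → Bool) → ℕ) :
    ∑ y, f y = (∑ x, f (Fin.cons c x)) + ∑ x, f (Fin.cons (!c) x) := by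
  cases c
  · simpa using sum_split f
  · rw [sum_split f]; simp [add_comm]

end Cube

section Conf

variable {d : ℕ}

/-- total pebbles -/
def pc {n : ℕ} (C : (Fin n → Bool) → ℕ) : ℕ := ∑ v, C v
/-- number of odd vertices (as a sum of parities) -/
def rcn {n : ℕ} (C : (Fin n → Bool) → ℕ) : ℕ := ∑ v, C v % 2
/-- number of disjoint pairs -/
def scn {n : ℕ} (C : (Fin n → Bool) → ℕ) : ℕ := ∑ v, C v / 2
/-- surplus pairs above a cover -/
def hcn {n : ℕ} (C : (Fin n → Bool) → ℕ) : ℕ := ∑ v, (C v - 1) / 2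

lemma pc_eq {n : ℕ} (C : (Fin n → Bool) → ℕ) : pc C = 2 * scn C + rcn C := by
  unfold pc scn rcn
  rw [Finset.mul_sum, ← Finset.sum_add_distrib]
  exact Finset.sum_congr rfl fun v _ => by omega

lemma rcn_le_pc {n : ℕ} (C : (Fin n → Bool) → ℕ) : rcn C ≤ pc C :=
  Finset.sum_le_sum fun v _ => Nat.mod_le _ _

lemma rcn_le_card {n : ℕ} (C : (Fin n → Bool) → ℕ) : rcn C ≤ 2 ^ n := by
  calc rcn C ≤ ∑ _v : Fin n → Bool, 1 :=
        Finset.sum_le_sum fun v _ => by omega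
    _ = Fintype.card (Fin n → Bool) := by simp
    _ = 2 ^ n := by simp [Fintype.card_fun]

/-- the half-configuration -/
def hf (D : (Fin (d+1) → Bool) → ℕ) (c : Bool) : (Fin d → Bool) → ℕ :=
  fun x => D (Fin.cons c x)

lemma pc_split (D : (Fin (d+1) → Bool) → ℕ) (c : Bool) :
    pc D = pc (hf D c) + pc (hf D (!c)) := sum_split' c D

lemma rcn_split (D : (Fin (d+1) → Bool) → ℕ) (c : Bool) :
    rcn D = rcn (hf D c) + rcn (hf D (!c)) := sum_split' c (fun y => D y % 2)

lemma hcn_split (D : (Fin (d+1) → Bool) → ℕ) (c : Bool) :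
    hcn D = hcn (hf D c) + hcn (hf D (!c)) := sum_split' c (fun y => (D y - 1) / 2)

lemma measure_update (g : ℕ → ℕ) (f : (Fin d → Bool) → ℕ) (x₀ : Fin d → Bool) (b : ℕ) :
    ∑ v, g (Function.update f x₀ b v) + g (f x₀) = g b + ∑ v, g (f v) := by
  classical
  have h1 : ∀ v, g (Function.update f x₀ b v) = Function.update (fun v => g (f v)) x₀ (g b) v := by
    intro v
    by_cases h : v = x₀
    · subst h; simp
    · simp [Function.update_of_ne h]
  rw [Finset.sum_congr rfl (fun v _ => h1 v), Finset.sum_update_of_mem (Finset.mem_univ x₀),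
    Finset.sum_eq_sum_sdiff_singleton_add (Finset.mem_univ x₀) (fun v => g (f v))]
  omega

lemma bool_ne_not (c : Bool) : c ≠ !c := by cases c <;> simp

/-- One cross move from half `c` to half `!c`, iterated `k` times. -/
lemma ship (c : Bool) : ∀ (k : ℕ) (D : (Fin (d+1) → Bool) → ℕ), k ≤ scn (hf D c) →
    ∃ D', Reach (cube (d+1)) D D' ∧
      pc (hf D' (!c)) = pc (hf D (!c)) + k ∧
      pc (hf D' c) + 2*k = pc (hf D c) ∧
      rcn (hf D' c) = rcn (hf D c) ∧
      scn (hf D' c) + k = scn (hf D c) := by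
  intro k
  induction k with
  | zero => exact fun D _ => ⟨D, Relation.ReflTransGen.refl, by simp, by simp, rfl, by simp⟩
  | succ m ih =>
    intro D hk
    obtain ⟨x₀, hx₀⟩ : ∃ x₀, 0 < D (Fin.cons c x₀) / 2 := by
      by_contra hcon
      push_neg at hcon
      have : scn (hf D c) = 0 :=
        Finset.sum_eq_zero (fun x _ => Nat.le_zero.mp (hcon x))
      omega
    have h2 : 2 ≤ D (Fin.cons c x₀ : Fin (d+1) → Bool) := by omega
    set u := (Fin.cons c x₀ : Fin (d+1) → Bool) with hu
    set v := (Fin.cons (!c) x₀ : Fin (d+1) → Bool) with hv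
    have hadj : (cube (d+1)).Adj u v := cube_adj_cross c (!c) (bool_ne_not c) x₀
    have hstep := pebbleStep_mk (G := cube (d+1)) (C := D) hadj h2
    set D1 := (fun y => if y = u then D u - 2 else if y = v then D v + 1 else D y) with hD1
    have hupd_c : hf D1 c = Function.update (hf D c) x₀ (D u - 2) := by
      funext x
      by_cases hx : x = x₀
      · subst hx; simp [hD1, hf, hu]
      · have h3 : (Fin.cons c x : Fin (d+1) → Bool) ≠ u :=
          fun hh => hx (Fin.cons_right_injective (α := fun _ : Fin (d+1) => Bool) c hh)
        have h4 : (Fin.cons c x : Fin (d+1) → Bool) ≠ v := cons_ne_cons (bool_ne_not c) x x₀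
        simp [hD1, hf, h3, h4, Function.update, hx]
    have hupd_nc : hf D1 (!c) = Function.update (hf D (!c)) x₀ (D v + 1) := by
      funext x
      have h4 : (Fin.cons (!c) x : Fin (d+1) → Bool) ≠ u :=
        cons_ne_cons (bool_ne_not c).symm x x₀
      by_cases hx : x = x₀
      · subst hx; simp [hD1, hf, hv, h4]
      · have h3 : (Fin.cons (!c) x : Fin (d+1) → Bool) ≠ v :=
          fun hh => hx (Fin.cons_right_injective (α := fun _ : Fin (d+1) => Bool) (!c) hh)
        simp [hD1, hf, h3, h4, Function.update, hx]
    have e1 : pc (hf D1 c) + hf D c x₀ = (D u - 2) + pc (hf D c) := by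
      rw [hupd_c]; exact measure_update id _ x₀ _
    have e2 : rcn (hf D1 c) + hf D c x₀ % 2 = (D u - 2) % 2 + rcn (hf D c) := by
      rw [hupd_c]; exact measure_update (· % 2) _ x₀ _
    have e3 : scn (hf D1 c) + hf D c x₀ / 2 = (D u - 2) / 2 + scn (hf D c) := by
      rw [hupd_c]; exact measure_update (· / 2) _ x₀ _
    have e4 : pc (hf D1 (!c)) + hf D (!c) x₀ = (D v + 1) + pc (hf D (!c)) := by
      rw [hupd_nc]; exact measure_update id _ x₀ _
    have hfx : hf D c x₀ = D u := rfl
    have hfx' : hf D (!c) x₀ = D v := rfl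
    rw [hfx] at e1 e2 e3
    rw [hfx'] at e4
    have hm : m ≤ scn (hf D1 c) := by omega
    obtain ⟨D2, hr, q1, q2, q3, q4⟩ := ih D1 hm
    refine ⟨D2, Relation.ReflTransGen.head hstep hr, by omega, by omega, by omega, by omega⟩

/-- Cross moves preserving coveredness of half `c`. -/
lemma shipCover (c : Bool) : ∀ (k : ℕ) (D : (Fin (d+1) → Bool) → ℕ),
    (∀ x, 1 ≤ hf D c x) → k ≤ hcn (hf D c) →
    ∃ D', Reach (cube (d+1)) D D' ∧
      (∀ x, 1 ≤ hf D' c x) ∧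
      pc (hf D' (!c)) = pc (hf D (!c)) + k ∧
      hcn (hf D' c) + k = hcn (hf D c) := by
  intro k
  induction k with
  | zero => exact fun D hcov _ => ⟨D, Relation.ReflTransGen.refl, hcov, by simp, by simp⟩
  | succ m ih =>
    intro D hcov hk
    obtain ⟨x₀, hx₀⟩ : ∃ x₀, 0 < (D (Fin.cons c x₀) - 1) / 2 := by
      by_contra hcon
      push_neg at hcon
      have : hcn (hf D c) = 0 :=
        Finset.sum_eq_zero (fun x _ => Nat.le_zero.mp (hcon x))
      omega
    have h2 : 3 ≤ D (Fin.cons c x₀ : Fin (d+1) → Bool) := by omega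
    set u := (Fin.cons c x₀ : Fin (d+1) → Bool) with hu
    set v := (Fin.cons (!c) x₀ : Fin (d+1) → Bool) with hv
    have hadj : (cube (d+1)).Adj u v := cube_adj_cross c (!c) (bool_ne_not c) x₀
    have hstep := pebbleStep_mk (G := cube (d+1)) (C := D) hadj (by omega)
    set D1 := (fun y => if y = u then D u - 2 else if y = v then D v + 1 else D y) with hD1
    have hupd_c : hf D1 c = Function.update (hf D c) x₀ (D u - 2) := by
      funext x
      by_cases hx : x = x₀
      · subst hx; simp [hD1, hf, hu]
      · have h3 : (Fin.cons c x : Fin (d+1) → Bool) ≠ u :=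
          fun hh => hx (Fin.cons_right_injective (α := fun _ : Fin (d+1) => Bool) c hh)
        have h4 : (Fin.cons c x : Fin (d+1) → Bool) ≠ v := cons_ne_cons (bool_ne_not c) x x₀
        simp [hD1, hf, h3, h4, Function.update, hx]
    have hupd_nc : hf D1 (!c) = Function.update (hf D (!c)) x₀ (D v + 1) := by
      funext x
      have h4 : (Fin.cons (!c) x : Fin (d+1) → Bool) ≠ u :=
        cons_ne_cons (bool_ne_not c).symm x x₀
      by_cases hx : x = x₀
      · subst hx; simp [hD1, hf, hv, h4]
      · have h3 : (Fin.cons (!c) x : Fin (d+1) → Bool) ≠ v :=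
          fun hh => hx (Fin.cons_right_injective (α := fun _ : Fin (d+1) => Bool) (!c) hh)
        simp [hD1, hf, h3, h4, Function.update, hx]
    have e1 : hcn (hf D1 c) + (hf D c x₀ - 1) / 2 = ((D u - 2) - 1) / 2 + hcn (hf D c) := by
      rw [hupd_c]; exact measure_update (fun t => (t - 1) / 2) _ x₀ _
    have e4 : pc (hf D1 (!c)) + hf D (!c) x₀ = (D v + 1) + pc (hf D (!c)) := by
      rw [hupd_nc]; exact measure_update id _ x₀ _
    have hfx : hf D c x₀ = D u := rfl
    have hfx' : hf D (!c) x₀ = D v := rfl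
    rw [hfx] at e1
    rw [hfx'] at e4
    have hcov1 : ∀ x, 1 ≤ hf D1 c x := by
      intro x
      rw [hupd_c]
      by_cases hx : x = x₀
      · subst hx; simp; omega
      · rw [Function.update_of_ne hx]; exact hcov x
    have hm : m ≤ hcn (hf D1 c) := by omega
    obtain ⟨D2, hr, q1, q2, q3⟩ := ih D1 hcov1 hm
    exact ⟨D2, Relation.ReflTransGen.head hstep hr, q1, by omega, by omega⟩

end Conf

section Pebbling

lemma half_lift {d : ℕ} (c : Bool) {C C' : (Fin d → Bool) → ℕ}
    (h : Reach (cube d) C C') (D : (Fin (d+1) → Bool) → ℕ) (hD : hf D c = C) :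
    ∃ D', Reach (cube (d+1)) D D' ∧ hf D' c = C' ∧ hf D' (!c) = hf D (!c) := by
  obtain ⟨D', hr, hin, hout⟩ := reach_lift
    (f := fun x => (Fin.cons c x : Fin (d+1) → Bool))
    (Fin.cons_right_injective (α := fun _ : Fin (d+1) => Bool) c)
    (fun hab => cube_adj_cons hab) h D (fun x => congrFun hD x)
  exact ⟨D', hr, funext hin,
    funext fun x => hout _ (fun x' => cons_ne_cons (bool_ne_not c).symm x x')⟩

/-- Chung's theorem: `π(Qᵈ) ≤ 2^d`, together with the odd two-pebbling property. -/
theorem pebbling_main (d : ℕ) :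
    (∀ (C : (Fin d → Bool) → ℕ) (t : Fin d → Bool), 2^d ≤ pc C →
      ∃ C', Reach (cube d) C C' ∧ 1 ≤ C' t) ∧
    (∀ (C : (Fin d → Bool) → ℕ) (t : Fin d → Bool), 2^(d+1) + 2 ≤ pc C + rcn C →
      ∃ C', Reach (cube d) C C' ∧ 2 ≤ C' t) := by
  induction d with
  | zero =>
    haveI : Subsingleton (Fin 0 → Bool) := ⟨fun a b => funext fun i => i.elim0⟩
    constructor
    · intro C t h
      have h1 : pc C = C t := Fintype.sum_subsingleton _ t
      refine ⟨C, Relation.ReflTransGen.refl, ?_⟩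
      have : (2:ℕ)^0 = 1 := rfl
      omega
    · intro C t h
      have h1 : pc C = C t := Fintype.sum_subsingleton _ t
      have h2 : rcn C = C t % 2 := Fintype.sum_subsingleton _ t
      refine ⟨C, Relation.ReflTransGen.refl, ?_⟩
      have : (2:ℕ)^1 = 2 := rfl
      omega
  | succ n ih =>
    obtain ⟨ih1, ih2⟩ := ih
    have hN1 : 1 ≤ 2^n := Nat.one_le_two_pow
    have h2N : (2:ℕ)^(n+1) = 2 * 2^n := by ring
    have h4N : (2:ℕ)^(n+2) = 4 * 2^n := by ring
    constructor
    -- Goal 1 : pebbling number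
    · intro C t h
      set c₀ := t 0 with hc₀
      set t₁ := Fin.tail t with ht₁
      have ht : (Fin.cons c₀ t₁ : Fin (n+1) → Bool) = t := Fin.cons_self_tail t
      have hsplit := pc_split C c₀
      by_cases hX : 2^n ≤ pc (hf C c₀)
      · obtain ⟨C', hr, h1⟩ := ih1 (hf C c₀) t₁ hX
        obtain ⟨D', hrD, hin, _⟩ := half_lift c₀ hr C rfl
        refine ⟨D', hrD, ?_⟩
        rw [← ht]
        have := congrFun hin t₁
        simp only [hf] at this
        omega
      · push_neg at hX
        by_cases hOdd : pc (hf C c₀) + 1 ≤ rcn (hf C (!c₀))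
        · -- two-pebble within the other half, then cross
          have hpar := pc_eq (hf C (!c₀))
          have hgY : 2^(n+1) + 2 ≤ pc (hf C (!c₀)) + rcn (hf C (!c₀)) := by omega
          obtain ⟨C', hr, h2⟩ := ih2 (hf C (!c₀)) t₁ hgY
          obtain ⟨D', hrD, hin, _⟩ := half_lift (!c₀) hr C rfl
          have h2' : 2 ≤ D' (Fin.cons (!c₀) t₁ : Fin (n+1) → Bool) := by
            have := congrFun hin t₁
            simp only [hf] at this
            omega
          have hadj : (cube (n+1)).Adj (Fin.cons (!c₀) t₁) (Fin.cons c₀ t₁) :=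
            cube_adj_cross _ _ (bool_ne_not c₀).symm t₁
          refine ⟨_, hrD.tail (pebbleStep_mk hadj h2'), ?_⟩
          have hne : (Fin.cons c₀ t₁ : Fin (n+1) → Bool) ≠ Fin.cons (!c₀) t₁ :=
            cons_ne_cons (bool_ne_not c₀) t₁ t₁
          rw [← ht]
          simp [hne]
        · push_neg at hOdd
          have hpar := pc_eq (hf C (!c₀))
          have hsY : 2^n - pc (hf C c₀) ≤ scn (hf C (!c₀)) := by omega
          obtain ⟨D1, hr1, q1, q2, q3, q4⟩ := ship (!c₀) (2^n - pc (hf C c₀)) C hsY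
          rw [Bool.not_not] at q1
          have hX1 : 2^n ≤ pc (hf D1 c₀) := by omega
          obtain ⟨C', hr, h1⟩ := ih1 (hf D1 c₀) t₁ hX1
          obtain ⟨D', hrD, hin, _⟩ := half_lift c₀ hr D1 rfl
          refine ⟨D', hr1.trans hrD, ?_⟩
          rw [← ht]
          have := congrFun hin t₁
          simp only [hf] at this
          omega
    -- Goal 2 : odd two-pebbling
    · intro C t h
      set c₀ := t 0 with hc₀
      set t₁ := Fin.tail t with ht₁
      have ht : (Fin.cons c₀ t₁ : Fin (n+1) → Bool) = t := Fin.cons_self_tail t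
      have hsplit := pc_split C c₀
      have hrsplit := rcn_split C c₀
      have hrxpx := rcn_le_pc (hf C c₀)
      have hrY := rcn_le_card (hf C (!c₀))
      by_cases hB1 : 2^(n+1) + 2 ≤ pc (hf C c₀) + rcn (hf C c₀)
      · obtain ⟨C', hr, h2⟩ := ih2 (hf C c₀) t₁ hB1
        obtain ⟨D', hrD, hin, _⟩ := half_lift c₀ hr C rfl
        refine ⟨D', hrD, ?_⟩
        rw [← ht]
        have := congrFun hin t₁
        simp only [hf] at this
        omega
      · push_neg at hB1
        by_cases hB2 : 2^n ≤ pc (hf C c₀)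
        · -- one pebble from own half, one from the other half
          obtain ⟨C', hr, h1⟩ := ih1 (hf C c₀) t₁ hB2
          obtain ⟨D1, hr1, hin1, hout1⟩ := half_lift c₀ hr C rfl
          have hpar := pc_eq (hf C (!c₀))
          have hgY : 2^(n+1) + 2 ≤ pc (hf D1 (!c₀)) + rcn (hf D1 (!c₀)) := by
            rw [hout1]; omega
          obtain ⟨C'', hr2, h2⟩ := ih2 (hf D1 (!c₀)) t₁ hgY
          obtain ⟨D2, hr2', hin2, hout2⟩ := half_lift (!c₀) hr2 D1 rfl
          rw [Bool.not_not] at hout2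
          have h2' : 2 ≤ D2 (Fin.cons (!c₀) t₁ : Fin (n+1) → Bool) := by
            have := congrFun hin2 t₁
            simp only [hf] at this
            omega
          have hadj : (cube (n+1)).Adj (Fin.cons (!c₀) t₁) (Fin.cons c₀ t₁) :=
            cube_adj_cross _ _ (bool_ne_not c₀).symm t₁
          refine ⟨_, (hr1.trans hr2').tail (pebbleStep_mk hadj h2'), ?_⟩
          have hne : (Fin.cons c₀ t₁ : Fin (n+1) → Bool) ≠ Fin.cons (!c₀) t₁ :=
            cons_ne_cons (bool_ne_not c₀) t₁ t₁
          have hD2t : D2 (Fin.cons c₀ t₁ : Fin (n+1) → Bool) = D1 (Fin.cons c₀ t₁) :=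
            congrFun hout2 t₁
          have hD1t : D1 (Fin.cons c₀ t₁ : Fin (n+1) → Bool) = C' t₁ := congrFun hin1 t₁
          rw [← ht]
          simp only [hne, if_false, if_neg hne]
          simp [hne]
          omega
        · push_neg at hB2
          have hparY := pc_eq (hf C (!c₀))
          by_cases hB9 : 2^n - pc (hf C c₀) ≤ scn (hf C (!c₀))
          · obtain ⟨D1, hr1, q1, q2, q3, q4⟩ := ship (!c₀) (2^n - pc (hf C c₀)) C hB9
            rw [Bool.not_not] at q1
            have hX1 : 2^n ≤ pc (hf D1 c₀) := by omega
            obtain ⟨C', hr, h1⟩ := ih1 (hf D1 c₀) t₁ hX1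
            obtain ⟨D2, hr2, hin2, hout2⟩ := half_lift c₀ hr D1 rfl
            have hgY : 2^(n+1) + 2 ≤ pc (hf D2 (!c₀)) + rcn (hf D2 (!c₀)) := by
              rw [hout2]; omega
            obtain ⟨C'', hr3, h2⟩ := ih2 (hf D2 (!c₀)) t₁ hgY
            obtain ⟨D3, hr3', hin3, hout3⟩ := half_lift (!c₀) hr3 D2 rfl
            rw [Bool.not_not] at hout3
            have h2' : 2 ≤ D3 (Fin.cons (!c₀) t₁ : Fin (n+1) → Bool) := by
              have := congrFun hin3 t₁
              simp only [hf] at this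
              omega
            have hadj : (cube (n+1)).Adj (Fin.cons (!c₀) t₁) (Fin.cons c₀ t₁) :=
              cube_adj_cross _ _ (bool_ne_not c₀).symm t₁
            refine ⟨_, ((hr1.trans hr2).trans hr3').tail (pebbleStep_mk hadj h2'), ?_⟩
            have hne : (Fin.cons c₀ t₁ : Fin (n+1) → Bool) ≠ Fin.cons (!c₀) t₁ :=
              cons_ne_cons (bool_ne_not c₀) t₁ t₁
            have hD3t : D3 (Fin.cons c₀ t₁ : Fin (n+1) → Bool) = D2 (Fin.cons c₀ t₁) :=
              congrFun hout3 t₁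
            have hD2t : D2 (Fin.cons c₀ t₁ : Fin (n+1) → Bool) = C' t₁ := congrFun hin2 t₁
            rw [← ht]
            simp [hne]
            omega
          · exfalso
            push_neg at hB9
            omega
end Pebbling

section Cover

lemma bool_eq_or (b c : Bool) : b = c ∨ b = !c := by
  cases b <;> cases c <;> simp

/-- `γ(Qᵈ) ≤ 3^d`, with surplus pairs. -/
theorem cover_main : ∀ (d : ℕ) (C : (Fin d → Bool) → ℕ) (k : ℕ), 3^d + 2*k ≤ pc C →
    ∃ C', Reach (cube d) C C' ∧ (∀ v, 1 ≤ C' v) ∧ k ≤ hcn C' := by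
  intro d
  induction d with
  | zero =>
    intro C k h
    haveI : Subsingleton (Fin 0 → Bool) := ⟨fun a b => funext fun i => i.elim0⟩
    have v₀ : Fin 0 → Bool := fun i => i.elim0
    have h1 : pc C = C v₀ := Fintype.sum_subsingleton _ v₀
    have h2 : hcn C = (C v₀ - 1) / 2 := Fintype.sum_subsingleton _ v₀
    have h30 : (3:ℕ)^0 = 1 := rfl
    refine ⟨C, Relation.ReflTransGen.refl, ?_, by omega⟩
    intro v
    have : v = v₀ := Subsingleton.elim v v₀
    rw [this]; omega
  | succ n ih =>
    have hM : 0 < 3^n := pow_pos (by norm_num) n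
    have h3M : (3:ℕ)^(n+1) = 3 * 3^n := by ring
    have aux : ∀ (C : (Fin (n+1) → Bool) → ℕ) (k : ℕ) (c₀ : Bool),
        3^(n+1) + 2*k ≤ pc C → pc (hf C (!c₀)) ≤ pc (hf C c₀) →
        ∃ C', Reach (cube (n+1)) C C' ∧ (∀ v, 1 ≤ C' v) ∧ k ≤ hcn C' := by
      intro C k c₀ h hba
      have hsplit := pc_split C c₀
      by_cases hb : 3^n ≤ pc (hf C (!c₀))
      · -- both halves are rich: cover each separately
        set kb := min ((pc (hf C (!c₀)) - 3^n)/2) k with hkb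
        have hkb1 : kb ≤ (pc (hf C (!c₀)) - 3^n)/2 := min_le_left _ _
        have hkb2 : kb ≤ k := min_le_right _ _
        have hkbc : kb = (pc (hf C (!c₀)) - 3^n)/2 ∨ kb = k := min_choice _ _
        have hbb : 3^n + 2*kb ≤ pc (hf C (!c₀)) := by omega
        have haa : 3^n + 2*(k - kb) ≤ pc (hf C c₀) := by omega
        obtain ⟨C1, hr1, hcov1, hp1⟩ := ih (hf C c₀) (k - kb) haa
        obtain ⟨D1, hrD1, hin1, hout1⟩ := half_lift c₀ hr1 C rfl
        have hbb1 : 3^n + 2*kb ≤ pc (hf D1 (!c₀)) := by rw [hout1]; exact hbb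
        obtain ⟨C2, hr2, hcov2, hp2⟩ := ih (hf D1 (!c₀)) kb hbb1
        obtain ⟨D2, hrD2, hin2, hout2⟩ := half_lift (!c₀) hr2 D1 rfl
        rw [Bool.not_not] at hout2
        have e1 : hf D2 c₀ = C1 := by rw [hout2, hin1]
        refine ⟨D2, hrD1.trans hrD2, ?_, ?_⟩
        · intro v
          have hv : (Fin.cons (v 0) (Fin.tail v) : Fin (n+1) → Bool) = v := Fin.cons_self_tail v
          rcases bool_eq_or (v 0) c₀ with hh|hh
          · rw [← hv, hh]
            have := congrFun e1 (Fin.tail v)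
            simp only [hf] at this
            rw [this]; exact hcov1 _
          · rw [← hv, hh]
            have := congrFun hin2 (Fin.tail v)
            simp only [hf] at this
            rw [this]; exact hcov2 _
        · have hh := hcn_split D2 c₀
          rw [e1, hin2] at hh
          omega
      · -- poor half: ship surplus pairs across
        push_neg at hb
        set k' := 3^n - pc (hf C (!c₀)) with hk'
        have haa : 3^n + 2*(k + k') ≤ pc (hf C c₀) := by omega
        obtain ⟨C1, hr1, hcov1, hp1⟩ := ih (hf C c₀) (k + k') haa
        obtain ⟨D1, hrD1, hin1, hout1⟩ := half_lift c₀ hr1 C rfl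
        have hcovD1 : ∀ x, 1 ≤ hf D1 c₀ x := by
          intro x; rw [congrFun hin1 x]; exact hcov1 x
        have hkpairs : k' ≤ hcn (hf D1 c₀) := by rw [hin1]; omega
        obtain ⟨D2, hrD2, hcov2, hpB, hpairs2⟩ := shipCover c₀ k' D1 hcovD1 hkpairs
        have hBsum : 3^n + 2*0 ≤ pc (hf D2 (!c₀)) := by
          rw [hpB, hout1]; omega
        obtain ⟨C3, hr3, hcov3, _⟩ := ih (hf D2 (!c₀)) 0 hBsum
        obtain ⟨D3, hrD3, hin3, hout3⟩ := half_lift (!c₀) hr3 D2 rfl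
        rw [Bool.not_not] at hout3
        refine ⟨D3, (hrD1.trans hrD2).trans hrD3, ?_, ?_⟩
        · intro v
          have hv : (Fin.cons (v 0) (Fin.tail v) : Fin (n+1) → Bool) = v := Fin.cons_self_tail v
          rcases bool_eq_or (v 0) c₀ with hh|hh
          · rw [← hv, hh]
            have := congrFun hout3 (Fin.tail v)
            simp only [hf] at this
            rw [this]; exact hcov2 _
          · rw [← hv, hh]
            have := congrFun hin3 (Fin.tail v)
            simp only [hf] at this
            rw [this]; exact hcov3 _
        · have hh := hcn_split D3 c₀
          have e1 : hcn (hf D3 c₀) = hcn (hf D2 c₀) := by rw [hout3]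
          have e3 : hcn (hf D1 c₀) = hcn C1 := by rw [hin1]
          omega
    intro C k h
    rcases le_total (pc (hf C false)) (pc (hf C true)) with hh|hh
    · exact aux C k true h (by simpa using hh)
    · exact aux C k false h (by simpa using hh)

end Cover

section Lower

lemma cube_unsolvable {d m : ℕ} (hm : m < 2^d) :
    ¬ (∀ (C : (Fin d → Bool) → ℕ) (t : Fin d → Bool), (∑ v, C v) = m →
      ∃ C', Relation.ReflTransGen (PebbleStep (cube d)) C C' ∧ 1 ≤ C' t) := by
  classical
  intro hall
  set t : Fin d → Bool := fun _ => false with hts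
  set u : Fin d → Bool := fun _ => true with hus
  set C : (Fin d → Bool) → ℕ := fun y => if y = u then m else 0 with hCs
  have hsum : ∑ v, C v = m := by simp [hCs]
  obtain ⟨C', hr, ht⟩ := hall C t hsum
  set w : (Fin d → Bool) → ℕ := fun y => 2^(d - hammingDist y t) with hws
  have hw : ∀ a b, (cube d).Adj a b → w b ≤ 2 * w a := by
    intro a b hab
    have hab1 : hammingDist a b = 1 := hab
    have h1 : hammingDist a t ≤ 1 + hammingDist b t := by
      have := hammingDist_triangle a b t
      omega
    have h2 : hammingDist b t ≤ d := le_trans hammingDist_le_card_fintype (by simp)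
    have h3 : d - hammingDist b t ≤ (d - hammingDist a t) + 1 := by omega
    calc w b = 2^(d - hammingDist b t) := rfl
      _ ≤ 2^((d - hammingDist a t) + 1) := Nat.pow_le_pow_right (by norm_num) h3
      _ = 2 * w a := by rw [pow_succ]; ring
  have hmono := weight_mono w hw hr
  have hut : hammingDist u t = d := by
    show (univ.filter fun i => u i ≠ t i).card = d
    have : (univ.filter fun i : Fin d => u i ≠ t i) = univ := by
      refine Finset.filter_true_of_mem fun i _ => by simp [hus, hts]
    rw [this]; simp
  have hini : ∑ x, C x * w x = m := by
    have : ∀ x, C x * w x = if x = u then m * w x else 0 := by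
      intro x; by_cases hx : x = u <;> simp [hCs, hx]
    rw [Finset.sum_congr rfl (fun x _ => this x), Finset.sum_ite_eq' univ u (fun x => m * w x)]
    simp [hws, hut]
  have hfin : 2^d ≤ ∑ x, C' x * w x := by
    have hwt : w t = 2^d := by simp [hws, hammingDist_self]
    calc (2:ℕ)^d = 1 * w t := by rw [hwt]; ring
      _ ≤ C' t * w t := Nat.mul_le_mul_right _ ht
      _ ≤ ∑ x, C' x * w x :=
        Finset.single_le_sum (f := fun x => C' x * w x) (fun i _ => Nat.zero_le _)
          (Finset.mem_univ t)
  omega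

lemma sum_pow_ham : ∀ d : ℕ, ∑ y : Fin d → Bool, 2^(hammingDist y (fun _ => false)) = 3^d := by
  intro d
  induction d with
  | zero =>
    haveI : Subsingleton (Fin 0 → Bool) := ⟨fun a b => funext fun i => i.elim0⟩
    rw [Fintype.sum_subsingleton _ (fun _ => false)]
    simp [hammingDist_self]
  | succ n ihs =>
    have hzero : (fun _ => false : Fin (n+1) → Bool) = Fin.cons false (fun _ => false) := by
      funext i
      refine Fin.cases ?_ ?_ i
      · simp
      · intro j; simp
    have hterm : ∀ (c : Bool) (x : Fin n → Bool),
        hammingDist (Fin.cons c x : Fin (n+1) → Bool) (fun _ => false)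
          = (if c = false then 0 else 1) + hammingDist x (fun _ => false) := by
      intro c x
      rw [hzero, hammingDist_cons]
    rw [sum_split (fun y => 2^(hammingDist y (fun _ => false)))]
    have e1 : ∑ x : Fin n → Bool, 2^(hammingDist (Fin.cons false x : Fin (n+1) → Bool) (fun _ => false)) = 3^n := by
      have hpt : ∀ x : Fin n → Bool,
          2^(hammingDist (Fin.cons false x : Fin (n+1) → Bool) (fun _ => false))
            = 2^(hammingDist x (fun _ => false)) := fun x => by rw [hterm]; simp
      rw [Finset.sum_congr rfl (fun x _ => hpt x)]
      exact ihs
    have e2 : ∑ x : Fin n → Bool, 2^(hammingDist (Fin.cons true x : Fin (n+1) → Bool) (fun _ => false)) = 2 * 3^n := by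
      have hpt : ∀ x : Fin n → Bool,
          2^(hammingDist (Fin.cons true x : Fin (n+1) → Bool) (fun _ => false))
            = 2 * 2^(hammingDist x (fun _ => false)) := by
        intro x
        rw [hterm]
        norm_num [pow_add]
      rw [Finset.sum_congr rfl (fun x _ => hpt x), ← Finset.mul_sum, ihs]
    rw [e1, e2]
    ring
lemma cube_uncoverable {d m : ℕ} (hm : m < 3^d) :
    ¬ (∀ C : (Fin d → Bool) → ℕ, (∑ v, C v) = m → Coverable (cube d) C) := by
  classical
  intro hall
  set u : Fin d → Bool := fun _ => false with hus
  set C : (Fin d → Bool) → ℕ := fun y => if y = u then m else 0 with hCs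
  have hsum : ∑ v, C v = m := by simp [hCs]
  obtain ⟨C', hr, hcov⟩ := hall C hsum
  set w : (Fin d → Bool) → ℕ := fun y => 2^(hammingDist y u) with hws
  have hw : ∀ a b, (cube d).Adj a b → w b ≤ 2 * w a := by
    intro a b hab
    have hab1 : hammingDist a b = 1 := hab
    have h1 : hammingDist b u ≤ 1 + hammingDist a u := by
      have h2 := hammingDist_triangle b a u
      have h3 : hammingDist b a = 1 := by rw [hammingDist_comm]; exact hab1
      omega
    calc w b = 2^(hammingDist b u) := rfl
      _ ≤ 2^(1 + hammingDist a u) := Nat.pow_le_pow_right (by norm_num) h1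
      _ = 2 * w a := by rw [pow_add]; ring
  have hmono := weight_mono w hw hr
  have hini : ∑ x, C x * w x = m := by
    have : ∀ x, C x * w x = if x = u then m * w x else 0 := by
      intro x; by_cases hx : x = u <;> simp [hCs, hx]
    rw [Finset.sum_congr rfl (fun x _ => this x), Finset.sum_ite_eq' univ u (fun x => m * w x)]
    simp [hws, hammingDist_self]
  have hfin : 3^d ≤ ∑ x, C' x * w x := by
    calc (3:ℕ)^d = ∑ y : Fin d → Bool, 2^(hammingDist y u) := (sum_pow_ham d).symm
      _ = ∑ y, w y := rfl
      _ ≤ ∑ y, C' y * w y := by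
          refine Finset.sum_le_sum (fun y _ => ?_)
          have := hcov y
          calc w y = 1 * w y := (one_mul _).symm
            _ ≤ C' y * w y := Nat.mul_le_mul_right _ (hcov y)
  omega

end Lower

section Values

theorem pebblingNumber_cube (d : ℕ) : pebblingNumber (cube d) = 2^d := by
  apply le_antisymm
  · apply Nat.sInf_le
    intro C t hsum
    exact (pebbling_main d).1 C t (le_of_eq hsum.symm)
  · apply le_csInf
    · exact ⟨2^d, fun C t hsum => (pebbling_main d).1 C t (le_of_eq hsum.symm)⟩
    · intro m hmem
      by_contra hlt
      push_neg at hlt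
      exact cube_unsolvable hlt hmem

theorem coverPebblingNumber_cube (d : ℕ) : coverPebblingNumber (cube d) = 3^d := by
  have hmem : ∀ C : (Fin d → Bool) → ℕ, (∑ v, C v) = 3^d → Coverable (cube d) C := by
    intro C hsum
    obtain ⟨C', hr, hcov, _⟩ := cover_main d C 0 (by unfold pc; omega)
    exact ⟨C', hr, hcov⟩
  apply le_antisymm
  · exact Nat.sInf_le hmem
  · apply le_csInf ⟨3^d, by exact hmem⟩
    intro m hm
    by_contra hlt
    push_neg at hlt
    exact cube_uncoverable hlt hm

end Values

end CPR

/-- The cover pebbling ratio of the `d`-cube equals `(3/2)^d`; equivalently,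
writing `n = 2^d` for the number of vertices of `Q^d`, the ratio
`γ(Q^d)/π(Q^d)` equals `n^(log₂ 3 − 1)`. -/
theorem cover_pebbling_ratio_cube (d : ℕ) :
    ((coverPebblingNumber (cube d) : ℝ) / (pebblingNumber (cube d) : ℝ)
        = ((3 : ℝ) / 2) ^ d) ∧
    ((3 : ℝ) / 2) ^ d = ((2 : ℝ) ^ d) ^ (Real.logb 2 3 - 1) := by
  constructor
  · rw [CPR.coverPebblingNumber_cube, CPR.pebblingNumber_cube]
    push_cast
    rw [← div_pow]
  · have h32 : ((3:ℝ)/2) = (2:ℝ) ^ (Real.logb 2 3 - 1) := by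
      rw [Real.rpow_sub (by norm_num), Real.rpow_logb (by norm_num) (by norm_num) (by norm_num),
        Real.rpow_one]
    rw [h32, ← Real.rpow_natCast ((2:ℝ) ^ (Real.logb 2 3 - 1)) d,
      ← Real.rpow_natCast (2:ℝ) d, ← Real.rpow_mul (by norm_num),
      ← Real.rpow_mul (by norm_num), mul_comm]
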